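/- Let R₁ and R₂ be commutative rings, φ : R₁ → R₂ a surjective ring homomorphism, n ≥ 1, and fix a monomial order on n-variable polynomials. Let Γ be a strong Gröbner basis of an ideal I of R₁[x₁,...,xₙ], and suppose that for every g ∈ Γ the image φ(lc(g)) of its leading coefficient is neither 0 nor a zero divisor in R₂. Then φ(Γ) (the image of Γ under the coefficientwise extension of φ) is a strong Gröbner basis of the image ideal φ(I) in R₂[x₁,...,xₙ]. -/

import Mathlib

open MvPolynomial

variable {R : Type*} [CommRing R] {σ : Type*}

/-- The leading exponent vector (leading term) of a polynomial with respect to a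
monomial order: the largest exponent vector with nonzero coefficient. -/
noncomputable def mDegree (m : MonomialOrder σ) (f : MvPolynomial σ R) : σ →₀ ℕ :=
  m.toSyn.symm (f.support.sup fun d => m.toSyn d)

/-- The leading coefficient of a polynomial with respect to a monomial order. -/
noncomputable def mLeadingCoeff (m : MonomialOrder σ) (f : MvPolynomial σ R) : R :=
  f.coeff (mDegree m f)

/-- `Γ ⊆ I \ {0}` is a strong Gröbner basis of `I` when, for every nonzero `f ∈ I`,
some `g ∈ Γ` has leading monomial `lm(g) = lc(g)·lt(g)` dividing `lm(f)`, i.e. the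
leading coefficient of `g` divides that of `f` and the leading exponent vector of `g`
is componentwise `≤` that of `f`. -/
def IsStrongGroebnerBasis (m : MonomialOrder σ) (I : Ideal (MvPolynomial σ R))
    (Γ : Set (MvPolynomial σ R)) : Prop :=
  Γ ⊆ (I : Set (MvPolynomial σ R)) \ {0} ∧
    ∀ f ∈ I, f ≠ 0 → ∃ g ∈ Γ,
      mLeadingCoeff m g ∣ mLeadingCoeff m f ∧ mDegree m g ≤ mDegree m f

lemma toSyn_mDegree (m : MonomialOrder σ) (f : MvPolynomial σ R) :
    m.toSyn (mDegree m f) = f.support.sup fun d => m.toSyn d :=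
  m.toSyn.apply_symm_apply _

lemma mDegree_mem_support {m : MonomialOrder σ} {f : MvPolynomial σ R} (hf : f ≠ 0) :
    mDegree m f ∈ f.support := by
  obtain ⟨d, hd, hsup⟩ := Finset.exists_mem_eq_sup f.support
    (MvPolynomial.support_nonempty.2 hf) fun d => m.toSyn d
  have : mDegree m f = d := by
    apply m.toSyn.injective
    rw [toSyn_mDegree, hsup]
  rwa [this]

lemma le_toSyn_mDegree {m : MonomialOrder σ} {f : MvPolynomial σ R} {d : σ →₀ ℕ}
    (hd : d ∈ f.support) : m.toSyn d ≤ m.toSyn (mDegree m f) := by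
  rw [toSyn_mDegree]
  exact Finset.le_sup hd

lemma coeff_eq_zero_of_mDegree_lt {m : MonomialOrder σ} {f : MvPolynomial σ R} {d : σ →₀ ℕ}
    (h : m.toSyn (mDegree m f) < m.toSyn d) : f.coeff d = 0 := by
  by_contra hc
  exact absurd (le_toSyn_mDegree (MvPolynomial.mem_support_iff.2 hc)) (not_le.2 h)

lemma mDegree_map_eq {R₂ : Type*} [CommRing R₂] {φ : R →+* R₂}
    {m : MonomialOrder σ} {f : MvPolynomial σ R} (hf : φ (mLeadingCoeff m f) ≠ 0) :
    mDegree m (MvPolynomial.map φ f) = mDegree m f := by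
  have hne : f ≠ 0 := by
    rintro rfl
    simp [mLeadingCoeff] at hf
  have hmem : mDegree m f ∈ (MvPolynomial.map φ f).support := by
    rw [MvPolynomial.mem_support_iff, MvPolynomial.coeff_map]
    exact hf
  apply m.toSyn.injective
  apply le_antisymm
  · rw [toSyn_mDegree, toSyn_mDegree]
    exact Finset.sup_mono (MvPolynomial.support_map_subset φ f)
  · exact le_toSyn_mDegree hmem

lemma mLeadingCoeff_map_eq {R₂ : Type*} [CommRing R₂] {φ : R →+* R₂}
    {m : MonomialOrder σ} {f : MvPolynomial σ R} (hf : φ (mLeadingCoeff m f) ≠ 0) :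
    mLeadingCoeff m (MvPolynomial.map φ f) = φ (mLeadingCoeff m f) := by
  rw [mLeadingCoeff, mDegree_map_eq hf, MvPolynomial.coeff_map, mLeadingCoeff]

/-- Proposition 2: if `φ : R₁ → R₂` is surjective and `Γ` is a strong Gröbner basis of
`I ⊆ R₁[x₁,…,xₙ]` (`n ≥ 1`) such that `φ(lc(g))` is neither zero nor a zero divisor for all
`g ∈ Γ`, then `φ(Γ)` is a strong Gröbner basis of the image ideal `φ(I)`. -/
theorem map_strong_groebner_basis
    {R₁ R₂ : Type*} [CommRing R₁] [CommRing R₂]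
    (φ : R₁ →+* R₂) (hφ : Function.Surjective φ)
    (n : ℕ) (hn : 1 ≤ n) (m : MonomialOrder (Fin n))
    (I : Ideal (MvPolynomial (Fin n) R₁)) (Γ : Set (MvPolynomial (Fin n) R₁))
    (hΓ : IsStrongGroebnerBasis m I Γ)
    (hlc : ∀ g ∈ Γ, φ (mLeadingCoeff m g) ≠ 0 ∧
      φ (mLeadingCoeff m g) ∈ nonZeroDivisors R₂) :
    IsStrongGroebnerBasis m (Ideal.map (MvPolynomial.map φ) I)
      (MvPolynomial.map φ '' Γ) := by
  constructor
  · rintro _ ⟨g, hgΓ, rfl⟩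
    refine ⟨Ideal.mem_map_of_mem _ ((hΓ.1 hgΓ).1), ?_⟩
    intro h0
    apply (hlc g hgΓ).1
    have : (MvPolynomial.map φ g).coeff (mDegree m g) = φ (mLeadingCoeff m g) := by
      rw [MvPolynomial.coeff_map, mLeadingCoeff]
    rw [← this]
    simp only [Set.mem_singleton_iff] at h0
    rw [h0, MvPolynomial.coeff_zero]
  · intro f' hf' hf'ne
    obtain ⟨f, hfI, rfl⟩ := (Ideal.mem_map_iff_of_surjective _
      (MvPolynomial.map_surjective φ hφ)).1 hf'
    clear hf'
    suffices H : ∀ a : m.syn, ∀ f ∈ I, m.toSyn (mDegree m f) = a →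
        MvPolynomial.map φ f ≠ 0 →
        ∃ g' ∈ MvPolynomial.map φ '' Γ,
          mLeadingCoeff m g' ∣ mLeadingCoeff m (MvPolynomial.map φ f) ∧
          mDegree m g' ≤ mDegree m (MvPolynomial.map φ f) by
      exact H _ f hfI rfl hf'ne
    intro a
    induction a using WellFoundedLT.induction with
    | _ a IH =>
      intro f hfI ha hfne
      have hf0 : f ≠ 0 := by rintro rfl; simp at hfne
      obtain ⟨g, hgΓ, ⟨c, hc⟩, hdeg⟩ := hΓ.2 f hfI hf0
      by_cases hlcf : φ (mLeadingCoeff m f) = 0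
      · -- reduction step
        have hc0 : φ c = 0 := by
          apply (hlc g hgΓ).2.2 (φ c)
          rw [mul_comm, ← map_mul, ← hc, hlcf]
        set δ := mDegree m f - mDegree m g with hδdef
        have hδ : δ + mDegree m g = mDegree m f := tsub_add_cancel_of_le hdeg
        set h := f - MvPolynomial.monomial δ c * g with hhdef
        have hhI : h ∈ I := I.sub_mem hfI (I.mul_mem_left _ (hΓ.1 hgΓ).1)
        have hmap : MvPolynomial.map φ h = MvPolynomial.map φ f := by
          rw [hhdef, map_sub, map_mul, MvPolynomial.map_monomial, hc0]
          simp
        have hmapne : MvPolynomial.map φ h ≠ 0 := by rw [hmap]; exact hfne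
        have hh0 : h ≠ 0 := by intro h0; rw [h0] at hmapne; simp at hmapne
        have key : ∀ d ∈ h.support, m.toSyn d < m.toSyn (mDegree m f) := by
          intro d hd
          rcases lt_trichotomy (m.toSyn d) (m.toSyn (mDegree m f)) with hlt | heq | hgt
          · exact hlt
          · exfalso
            have hdeq : d = mDegree m f := m.toSyn.injective heq
            have : h.coeff d = 0 := by
              rw [hhdef, MvPolynomial.coeff_sub, hdeq, ← hδ,
                MvPolynomial.coeff_monomial_mul, hδ]
              rw [show f.coeff (mDegree m f) = mLeadingCoeff m f from rfl, hc,
                show g.coeff (mDegree m g) = mLeadingCoeff m g from rfl, mul_comm, sub_self]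
            exact MvPolynomial.mem_support_iff.1 hd this
          · exfalso
            have h1 : f.coeff d = 0 := coeff_eq_zero_of_mDegree_lt hgt
            have h2 : (MvPolynomial.monomial δ c * g).coeff d = 0 := by
              rw [MvPolynomial.coeff_monomial_mul']
              split_ifs with hle
              · have : g.coeff (d - δ) = 0 := by
                  by_contra hne
                  have h3 : m.toSyn (d - δ) ≤ m.toSyn (mDegree m g) :=
                    le_toSyn_mDegree (MvPolynomial.mem_support_iff.2 hne)
                  have h4 : m.toSyn d ≤ m.toSyn (mDegree m f) := by
                    calc m.toSyn d = m.toSyn (δ + (d - δ)) := by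
                          rw [add_tsub_cancel_of_le hle]
                      _ = m.toSyn δ + m.toSyn (d - δ) := map_add _ _ _
                      _ ≤ m.toSyn δ + m.toSyn (mDegree m g) := by
                          exact add_le_add_right h3 _
                      _ = m.toSyn (δ + mDegree m g) := (map_add _ _ _).symm
                      _ = m.toSyn (mDegree m f) := by rw [hδ]
                  exact absurd h4 (not_le.2 hgt)
                rw [this, mul_zero]
              · rfl
            have : h.coeff d = 0 := by
              rw [hhdef, MvPolynomial.coeff_sub, h1, h2, sub_self]
            exact MvPolynomial.mem_support_iff.1 hd this
        have hlt : m.toSyn (mDegree m h) < a := by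
          rw [← ha]
          exact key _ (mDegree_mem_support hh0)
        obtain ⟨g', hg', hdvd, hle⟩ := IH _ hlt h hhI rfl hmapne
        rw [hmap] at hdvd hle
        exact ⟨g', hg', hdvd, hle⟩
      · -- leading coefficient survives
        refine ⟨MvPolynomial.map φ g, ⟨g, hgΓ, rfl⟩, ?_, ?_⟩
        · rw [mLeadingCoeff_map_eq (hlc g hgΓ).1, mLeadingCoeff_map_eq hlcf]
          exact ⟨φ c, by rw [← map_mul, ← hc]⟩
        · rw [mDegree_map_eq (hlc g hgΓ).1, mDegree_map_eq hlcf]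
          exact hdeg
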